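/- Let d ≥ 2 be an integer and let (h; m_1, …, m_l) be a Fuchsian signature with 3h - 3 + l = d, each m_i ≥ 2, and hyperbolic area μ = 2π(2h - 2 + Σ(1 - 1/m_i)) > 0. If μ = 2π(d-1)/2 (i.e., the minimum possible), then h = 0, l = d + 3, and m_i = 2 for all i. -/

import Mathlib

/-- If a Fuchsian signature of Teichmüller dimension d ≥ 2 with positive
hyperbolic area attains the minimal area 2π(d-1)/2, then h = 0, l = d + 3 and all
periods equal 2. -/
theorem fuchsian_area_equality_case (d h l : ℕ) (m : Fin l → ℕ)
    (hd : 2 ≤ d) (hm : ∀ i, 2 ≤ m i)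
    (hdim : 3 * (h : ℤ) - 3 + l = d)
    (hpos : 0 < 2 * Real.pi * (2 * (h : ℝ) - 2 + ∑ i, (1 - 1 / (m i : ℝ))))
    (heq : 2 * Real.pi * (2 * (h : ℝ) - 2 + ∑ i, (1 - 1 / (m i : ℝ)))
      = 2 * Real.pi * ((d : ℝ) - 1) / 2) :
    h = 0 ∧ l = d + 3 ∧ ∀ i, m i = 2 := by
  have hπ : (2 : ℝ) * Real.pi ≠ 0 := by positivity
  have hA : 2 * (h : ℝ) - 2 + ∑ i, (1 - 1 / (m i : ℝ)) = ((d : ℝ) - 1) / 2 :=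
    mul_left_cancel₀ hπ (heq.trans (by ring))
  have hterm : ∀ i ∈ Finset.univ, (1 / 2 : ℝ) ≤ 1 - 1 / (m i : ℝ) := by
    intro i _
    have h2 : (2 : ℝ) ≤ (m i : ℝ) := by exact_mod_cast hm i
    have := one_div_le_one_div_of_le (by norm_num : (0:ℝ) < 2) h2
    linarith
  have hS : (l : ℝ) / 2 ≤ ∑ i, (1 - 1 / (m i : ℝ)) := by
    have := Finset.sum_le_sum hterm
    simpa [Finset.sum_const, Finset.card_univ, mul_one_div, div_eq_mul_inv] using this
  have hl : (l : ℝ) = (d : ℝ) + 3 - 3 * h := by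
    have h' : ((3 * (h : ℤ) - 3 + l : ℤ) : ℝ) = ((d : ℤ) : ℝ) := by rw [hdim]
    push_cast at h'
    linarith
  have hh0 : (h : ℝ) = 0 := by
    have hh : (0 : ℝ) ≤ (h : ℝ) := Nat.cast_nonneg h
    linarith
  have hh : h = 0 := by exact_mod_cast hh0
  have hleq : l = d + 3 := by omega
  refine ⟨hh, hleq, ?_⟩
  have hSl : ∑ i : Fin l, (1 / 2 : ℝ) = ∑ i, (1 - 1 / (m i : ℝ)) := by
    rw [Finset.sum_const, Finset.card_univ, Fintype.card_fin]
    have : (l : ℝ) = (d : ℝ) + 3 := by rw [hl, hh0]; ring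
    rw [nsmul_eq_mul]
    linarith
  have heach := (Finset.sum_eq_sum_iff_of_le hterm).mp hSl
  intro i
  have hi := heach i (Finset.mem_univ i)
  have h2 : (2 : ℝ) ≤ (m i : ℝ) := by exact_mod_cast hm i
  have hmne : (m i : ℝ) ≠ 0 := by linarith
  have : (m i : ℝ) = 2 := by field_simp at hi; linarith
  exact_mod_cast this
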